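/- Assume {W_ε} is L-admissible and the numbers e^{−2πikβ_1},…,e^{−2πikβ_S} are pairwise distinct. Fix s ∈ {1,…,S} and suppose that for each sufficiently small ε > 0, f_ε ∈ ℂ^N is a unit-norm vector with P_{ε,β} f_ε = λ_ε f_ε and λ_ε → e^{−2πikβ_s} as ε → 0. Then every accumulation point f_* of the family {f_ε} as ε → 0 is a unit-norm eigenvector of the matrix P̂_{k,β,L}, i.e. there exists λ_* ∈ ℂ with P̂_{k,β,L} f_* = λ_* f_*; moreover f_* ∈ V_s. -/

import Mathlib

noncomputable section
open Complex Filter Topology MeasureTheory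

/-- `eC k b = exp(-2πi k b)`. -/
def eC (k : ℤ) (b : ℝ) : ℂ := Complex.exp (-2 * (Real.pi : ℂ) * Complex.I * (k : ℂ) * (b : ℂ))

variable {N S : ℕ}

/-- Hermitian inner product `⟨v,w⟩ = ∑_j v j * conj (w j)` on `ℂ^N`. -/
def inn (v w : Fin N → ℂ) : ℂ := ∑ j, v j * (starRingEnd ℂ) (w j)

/-- Euclidean norm on `ℂ^N`. -/
def nrm (v : Fin N → ℂ) : ℝ := Real.sqrt (∑ j, Complex.normSq (v j))

/-- `W_ε = I + ε Ẇ` (complexified). -/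
def Weps (Wd : Matrix (Fin N) (Fin N) ℝ) (ε : ℝ) : Matrix (Fin N) (Fin N) ℂ :=
  1 + (ε : ℂ) • (Wd.map Complex.ofReal)

/-- The diagonal matrix `D_{k,α}` with entries `exp(-2πik α_j)`. -/
def DmatA (k : ℤ) (α : Fin N → ℝ) : Matrix (Fin N) (Fin N) ℂ :=
  Matrix.diagonal fun j => eC k (α j)

/-- Partial sums of the band-width vector: `Nsum L s = L 0 + ⋯ + L (s-1)`. -/
def Nsum (L : Fin S → ℕ) (s : ℕ) : ℕ := ∑ i : Fin S, if (i : ℕ) < s then L i else 0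

/-- `j` belongs to the `s`-th band `B_s` (with `j` 0-indexed). -/
def inBand (L : Fin S → ℕ) (s : Fin S) (j : Fin N) : Prop :=
  Nsum L (s : ℕ) ≤ (j : ℕ) ∧ (j : ℕ) < Nsum L ((s : ℕ) + 1)

/-- `D_{k,β,L}`: block-diagonal with `s`-th block `exp(-2πik β_s)·Id`, expressed
via the band-index function `bI` (where `bI j` is the band of `j`). -/
def Dmat (k : ℤ) (β : Fin S → ℝ) (bI : Fin N → Fin S) : Matrix (Fin N) (Fin N) ℂ :=
  Matrix.diagonal fun j => eC k (β (bI j))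

/-- `P_{ε,β} = D_{k,β,L} W_ε`. -/
def Pmat (k : ℤ) (β : Fin S → ℝ) (bI : Fin N → Fin S) (Wd : Matrix (Fin N) (Fin N) ℝ)
    (ε : ℝ) : Matrix (Fin N) (Fin N) ℂ := Dmat k β bI * Weps Wd ε

/-- `Ŵ_L`: the block-diagonal part of `Ẇ` (blocks `Ŵ_1, …, Ŵ_S`). -/
def WhatL (Wd : Matrix (Fin N) (Fin N) ℝ) (bI : Fin N → Fin S) : Matrix (Fin N) (Fin N) ℝ :=
  Matrix.of fun j l => if bI j = bI l then Wd j l else 0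

/-- `P̂_{k,β,L} = D_{k,β,L} Ŵ_L`. -/
def Phat (k : ℤ) (β : Fin S → ℝ) (bI : Fin N → Fin S) (Wd : Matrix (Fin N) (Fin N) ℝ) :
    Matrix (Fin N) (Fin N) ℂ := Dmat k β bI * (WhatL Wd bI).map Complex.ofReal

/-- `L`-admissibility of the family `W_ε = I + εẆ`. -/
def LAdmissible (L : Fin S → ℕ) (Wd : Matrix (Fin N) (Fin N) ℝ) (bI : Fin N → Fin S) : Prop :=
  Wd.IsSymm ∧ (∀ i j, i ≠ j → 0 ≤ Wd i j) ∧ (∀ i, ∑ j, Wd i j = 0) ∧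
  (∃ μ : Fin N → ℝ, Function.Injective μ ∧ ∃ v : Fin N → Fin N → ℝ,
    (∀ i, v i ≠ 0) ∧ ∀ i, Wd.mulVec (v i) = μ i • v i) ∧
  (∀ s : Fin S, ∃ μ : Fin (L s) → ℝ, Function.Injective μ ∧
    ∃ v : Fin (L s) → Fin N → ℝ, (∀ i, v i ≠ 0) ∧ (∀ i j, bI j ≠ s → v i j = 0) ∧
      ∀ i, (WhatL Wd bI).mulVec (v i) = μ i • v i)

/-- `β ∈ Γ`: for every nonzero integer `k'`, the exponentials `exp(-2πik' β_s)`
of distinct bands never coincide. -/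
def Gamma (β : Fin S → ℝ) : Prop :=
  ∀ k' : ℤ, k' ≠ 0 → ∀ s1 s2 : Fin S, s1 ≠ s2 → eC k' (β s1) ≠ eC k' (β s2)

/-- Orthogonal projection `π_s` of `ℂ^N` onto `V_s`. -/
def projBand (bI : Fin N → Fin S) (s : Fin S) (v : Fin N → ℂ) : Fin N → ℂ :=
  fun j => if bI j = s then v j else 0

/-- `min_{θ∈[0,2π)} ‖v − e^{iθ} w‖`. -/
def phaseDist (v w : Fin N → ℂ) : ℝ :=
  sInf ((fun θ : ℝ => nrm (v - Complex.exp (θ * Complex.I) • w)) '' Set.Ico 0 (2 * Real.pi))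

/-- `dist_{ℂP}(v,w) = min_{θ∈[0,2π)} ‖v/‖v‖ − e^{iθ}·w/‖w‖‖`. -/
def cpDist (v w : Fin N → ℂ) : ℝ :=
  sInf ((fun θ : ℝ =>
    nrm ((nrm v)⁻¹ • v - Complex.exp (θ * Complex.I) • ((nrm w)⁻¹ • w))) '' Set.Ico 0 (2 * Real.pi))

/-- accumulation points of unit eigenvectors `f_ε` (with `λ_ε → exp(-2πikβ_s)`)
are unit-norm eigenvectors of `P̂_{k,β,L}` lying in `V_s`. -/
theorem stmt6 (N S : ℕ) (hN : 1 ≤ N) (hS1 : 1 ≤ S) (hSN : S ≤ N) (k : ℤ)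
    (β : Fin S → ℝ) (hβ : Function.Injective β)
    (L : Fin S → ℕ) (hL : ∀ s, 0 < L s) (hsum : ∑ s, L s = N)
    (bI : Fin N → Fin S) (hbI : ∀ j, inBand L (bI j) j)
    (Wd : Matrix (Fin N) (Fin N) ℝ) (hadm : LAdmissible L Wd bI)
    (hdist : ∀ s1 s2 : Fin S, s1 ≠ s2 → eC k (β s1) ≠ eC k (β s2))
    (s : Fin S) (ε₀ : ℝ) (hε₀ : 0 < ε₀)
    (f : ℝ → Fin N → ℂ) (lam : ℝ → ℂ)
    (hunit : ∀ ε ∈ Set.Ioo (0:ℝ) ε₀, nrm (f ε) = 1)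
    (heig : ∀ ε ∈ Set.Ioo (0:ℝ) ε₀, (Pmat k β bI Wd ε).mulVec (f ε) = lam ε • f ε)
    (hlam : Tendsto lam (𝓝[>] (0:ℝ)) (𝓝 (eC k (β s))))
    (fstar : Fin N → ℂ) (hacc : MapClusterPt fstar (𝓝[>] (0:ℝ)) f) :
    nrm fstar = 1 ∧ (∀ j, ¬ inBand L s j → fstar j = 0) ∧
      ∃ lamstar : ℂ, (Phat k β bI Wd).mulVec fstar = lamstar • fstar := by
    classical
  set es : ℂ := eC k (β s) with hes
  set A : Matrix (Fin N) (Fin N) ℂ := Wd.map Complex.ofReal with hA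
  -- coordinatewise eigen-equation
  have hkey : ∀ ε ∈ Set.Ioo (0:ℝ) ε₀, ∀ j,
      eC k (β (bI j)) * (f ε j + (ε:ℂ) * (A.mulVec (f ε)) j) = lam ε * f ε j := by
    intro ε hε j
    have h := congrFun (heig ε hε) j
    rw [Pmat, ← Matrix.mulVec_mulVec] at h
    rw [Weps, Matrix.add_mulVec, Matrix.one_mulVec, Matrix.smul_mulVec] at h
    simpa [Dmat, Matrix.mulVec_diagonal, smul_eq_mul, mul_comm] using h
  -- extract a sequence
  have h1 : ∀ n : ℕ, ∃ ε : ℝ, ε ∈ Set.Ioo 0 (min ε₀ (1/((n:ℝ)+1))) ∧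
      dist (f ε) fstar < 1/((n:ℝ)+1) := by
    intro n
    have hδ : (0:ℝ) < 1/((n:ℝ)+1) := by positivity
    have hU : Set.Ioo (0:ℝ) (min ε₀ (1/((n:ℝ)+1))) ∈ 𝓝[>] (0:ℝ) :=
      Ioo_mem_nhdsGT_of_mem ⟨le_refl 0, lt_min hε₀ hδ⟩
    have hb : Metric.ball fstar (1/((n:ℝ)+1)) ∈ 𝓝 fstar := Metric.ball_mem_nhds _ hδ
    have hfr := (mapClusterPt_iff_frequently.mp hacc) _ hb
    obtain ⟨ε, hεU, hfε⟩ := frequently_iff.mp hfr hU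
    exact ⟨ε, hεU, by simpa [Metric.mem_ball] using hfε⟩
  choose εs hε1 hε2 using h1
  have hεpos : ∀ n, 0 < εs n := fun n => (hε1 n).1
  have hεIoo : ∀ n, εs n ∈ Set.Ioo (0:ℝ) ε₀ :=
    fun n => ⟨hεpos n, lt_of_lt_of_le (hε1 n).2 (min_le_left _ _)⟩
  have htend0 : Tendsto εs atTop (𝓝 0) :=
    squeeze_zero (fun n => (hεpos n).le)
      (fun n => le_of_lt (lt_of_lt_of_le (hε1 n).2 (min_le_right _ _)))
      tendsto_one_div_add_atTop_nhds_zero_nat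
  have htendw : Tendsto εs atTop (𝓝[>] (0:ℝ)) :=
    tendsto_nhdsWithin_of_tendsto_nhds_of_eventually_within _ htend0
      (Filter.Eventually.of_forall fun n => hεpos n)
  set g : ℕ → Fin N → ℂ := fun n => f (εs n) with hg
  have htendg : Tendsto g atTop (𝓝 fstar) := by
    rw [tendsto_iff_dist_tendsto_zero]
    exact squeeze_zero (fun n => dist_nonneg) (fun n => (hε2 n).le)
      tendsto_one_div_add_atTop_nhds_zero_nat
  have hgj : ∀ j, Tendsto (fun n => g n j) atTop (𝓝 (fstar j)) := tendsto_pi_nhds.mp htendg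
  have htendl : Tendsto (fun n => lam (εs n)) atTop (𝓝 es) := hlam.comp htendw
  have htendεC : Tendsto (fun n => ((εs n : ℝ) : ℂ)) atTop (𝓝 0) := by
    have := (Complex.continuous_ofReal.tendsto (0:ℝ)).comp htend0
    simp only [Complex.ofReal_zero] at this
    exact this
  have hAj : ∀ j, Tendsto (fun n => (A.mulVec (g n)) j) atTop (𝓝 ((A.mulVec fstar) j)) := by
    intro j
    simp only [Matrix.mulVec, dotProduct]
    exact tendsto_finset_sum _ fun l _ => (hgj l).const_mul _
  -- norm 1
  have hnrm : nrm fstar = 1 := by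
    have hc : Tendsto (fun n => nrm (g n)) atTop (𝓝 (nrm fstar)) := by
      have hsum : Tendsto (fun n => ∑ j, Complex.normSq (g n j)) atTop
          (𝓝 (∑ j, Complex.normSq (fstar j))) :=
        tendsto_finset_sum _ fun j _ => (Complex.continuous_normSq.tendsto _).comp (hgj j)
      exact (Real.continuous_sqrt.tendsto _).comp hsum
    have hc1 : Tendsto (fun n => nrm (g n)) atTop (𝓝 1) := by
      refine Tendsto.congr (fun n => ?_) tendsto_const_nhds
      exact (hunit (εs n) (hεIoo n)).symm
    exact tendsto_nhds_unique hc hc1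
  -- the sequence eigen-equation
  have hkeyn : ∀ n j, eC k (β (bI j)) * (g n j + ((εs n : ℝ):ℂ) * (A.mulVec (g n)) j)
      = lam (εs n) * g n j := fun n j => hkey (εs n) (hεIoo n) j
  -- vanishing off band s
  have hzero : ∀ j, bI j ≠ s → fstar j = 0 := by
    intro j hne
    have hL1 : Tendsto (fun n => eC k (β (bI j)) * (g n j + ((εs n : ℝ):ℂ) * (A.mulVec (g n)) j))
        atTop (𝓝 (eC k (β (bI j)) * (fstar j + 0 * (A.mulVec fstar) j))) :=
      (((hgj j).add (htendεC.mul (hAj j)))).const_mul _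
    have hL2 : Tendsto (fun n => lam (εs n) * g n j) atTop (𝓝 (es * fstar j)) :=
      htendl.mul (hgj j)
    have heq : eC k (β (bI j)) * (fstar j + 0 * (A.mulVec fstar) j) = es * fstar j :=
      tendsto_nhds_unique (hL1.congr fun n => hkeyn n j) hL2
    have heq2 : (eC k (β (bI j)) - es) * fstar j = 0 := by linear_combination heq
    rcases mul_eq_zero.mp heq2 with h | h
    · exact absurd (sub_eq_zero.mp h) (hdist (bI j) s hne)
    · exact h
  have hband : ∀ j, ¬ inBand L s j → fstar j = 0 := by
    intro j hj
    refine hzero j fun hEq => hj ?_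
    rw [← hEq]; exact hbI j
  -- a nonzero coordinate (necessarily in band s)
  have hj0 : ∃ j0, fstar j0 ≠ 0 := by
    by_contra h
    push_neg at h
    have : nrm fstar = 0 := by simp [nrm, h]
    rw [hnrm] at this; norm_num at this
  obtain ⟨j0, hj0ne⟩ := hj0
  have hbj0 : bI j0 = s := by
    by_contra h; exact hj0ne (hzero j0 h)
  -- the Rayleigh quotients
  set cn : ℕ → ℂ := fun n => (lam (εs n) - es) / ((εs n : ℝ):ℂ) with hcn
  have hεC : ∀ n, ((εs n : ℝ):ℂ) ≠ 0 := fun n => by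
    exact_mod_cast ne_of_gt (hεpos n)
  have hsband : ∀ j, bI j = s → ∀ n, cn n * g n j = es * (A.mulVec (g n)) j := by
    intro j hj n
    have h := hkeyn n j
    rw [hj] at h
    have hne := hεC n
    have h2 : (lam (εs n) - es) * g n j = ((εs n : ℝ):ℂ) * (es * (A.mulVec (g n)) j) := by
      linear_combination -h
    simp only [hcn]
    rw [div_mul_eq_mul_div, h2, mul_div_cancel_left₀ _ hne]
  set cstar : ℂ := es * (A.mulVec fstar) j0 / fstar j0 with hcstar
  have htendc : Tendsto cn atTop (𝓝 cstar) := by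
    have hev : ∀ᶠ n in atTop, g n j0 ≠ 0 := (hgj j0).eventually_ne hj0ne
    have hq : Tendsto (fun n => es * (A.mulVec (g n)) j0 / g n j0) atTop (𝓝 cstar) :=
      (((hAj j0).const_mul es)).div (hgj j0) hj0ne
    refine Tendsto.congr' ?_ hq
    filter_upwards [hev] with n hn
    rw [div_eq_iff hn]
    exact (hsband j0 hbj0 n).symm
  have hlim : ∀ j, bI j = s → es * (A.mulVec fstar) j = cstar * fstar j := by
    intro j hj
    have h1 : Tendsto (fun n => cn n * g n j) atTop (𝓝 (cstar * fstar j)) :=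
      htendc.mul (hgj j)
    have h2 : Tendsto (fun n => es * (A.mulVec (g n)) j) atTop (𝓝 (es * (A.mulVec fstar) j)) :=
      (hAj j).const_mul es
    exact (tendsto_nhds_unique (h1.congr fun n => hsband j hj n) h2).symm
  refine ⟨hnrm, hband, cstar, ?_⟩
  funext j
  have hPh : ((Phat k β bI Wd).mulVec fstar) j
      = eC k (β (bI j)) * ∑ l, ((WhatL Wd bI j l : ℝ):ℂ) * fstar l := by
    rw [Phat, ← Matrix.mulVec_mulVec]
    simp only [Dmat, Matrix.mulVec_diagonal]
    simp only [Matrix.mulVec, dotProduct, Matrix.map_apply]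
  by_cases hj : bI j = s
  · have hsumEq : ∑ l, ((WhatL Wd bI j l : ℝ):ℂ) * fstar l
        = (A.mulVec fstar) j := by
      simp only [Matrix.mulVec, dotProduct, hA, Matrix.map_apply]
      refine Finset.sum_congr rfl fun l _ => ?_
      by_cases hl : bI l = s
      · simp [WhatL, hj, hl]
      · rw [hzero l hl]; simp
    rw [hPh, hsumEq, hj]
    rw [hlim j hj]
    simp [Pi.smul_apply, smul_eq_mul]
  · have hsum0 : ∑ l, ((WhatL Wd bI j l : ℝ):ℂ) * fstar l = 0 := by
      refine Finset.sum_eq_zero fun l _ => ?_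
      by_cases hl : bI j = bI l
      · have : bI l ≠ s := by rw [← hl]; exact hj
        rw [hzero l this, mul_zero]
      · simp [WhatL, hl]
    rw [hPh, hsum0, mul_zero]
    rw [Pi.smul_apply, smul_eq_mul, hzero j hj, mul_zero]
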